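/- Let C_a, C_b ≥ 0, R > 0 and m ∈ ℝ, and let (a_k)_{k≥0}, (b_k)_{k≥0} be sequences of complex numbers with |a_k| ≤ C_a·R^k·k!/(k+1)^m and |b_k| ≤ C_b·R^k·k!/(k+1)^m for all k. Then there exist c > 0, c' > 0 and C ≥ 0 such that for every integer N ≥ 1 one has |∑_{k=0}^{⌊cN⌋} N^{-k}·(∑_{i=0}^k a_i·b_{k-i}) − (∑_{k=0}^{⌊cN⌋} N^{-k}·a_k)·(∑_{k=0}^{⌊cN⌋} N^{-k}·b_k)| ≤ C·exp(-c'·N). -/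

import Mathlib

open Finset

/-- The summation of the Cauchy product of two analytic symbol sequences agrees with the
product of the summations, up to an exponentially small error. -/
theorem cauchy_product_summation
    (Ca Cb R m : ℝ) (hCa : 0 ≤ Ca) (hCb : 0 ≤ Cb) (hR : 0 < R) (a b : ℕ → ℂ)
    (ha : ∀ k : ℕ, ‖a k‖ ≤ Ca * R ^ k * (Nat.factorial k) / ((k : ℝ) + 1) ^ m)
    (hb : ∀ k : ℕ, ‖b k‖ ≤ Cb * R ^ k * (Nat.factorial k) / ((k : ℝ) + 1) ^ m) :
    ∃ c : ℝ, 0 < c ∧ ∃ c' : ℝ, 0 < c' ∧ ∃ C : ℝ, 0 ≤ C ∧ ∀ N : ℕ, 1 ≤ N →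
      ‖(
        (∑ k ∈ Finset.range (⌊c * N⌋₊ + 1),
          ((N : ℂ))⁻¹ ^ k * (∑ i ∈ Finset.range (k + 1), a i * b (k - i)))
        - (∑ k ∈ Finset.range (⌊c * N⌋₊ + 1), ((N : ℂ))⁻¹ ^ k * a k)
          * (∑ k ∈ Finset.range (⌊c * N⌋₊ + 1), ((N : ℂ))⁻¹ ^ k * b k))‖
      ≤ C * Real.exp (-c' * N) := by
  set R' := R * Real.exp |m| with hR'def
  have hR'pos : 0 < R' := by positivity
  -- a cleaner bound on the sequences
  have key : ∀ (Cc : ℝ) (f : ℕ → ℂ), 0 ≤ Cc →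
      (∀ k, ‖f k‖ ≤ Cc * R ^ k * (Nat.factorial k) / ((k : ℝ) + 1) ^ m) →
      ∀ k, ‖f k‖ ≤ Cc * R' ^ k * (Nat.factorial k) := by
    intro Cc f hCc hf k
    have hb1 : (1 : ℝ) ≤ (k : ℝ) + 1 := le_add_of_nonneg_left (Nat.cast_nonneg k)
    have h0 : ((k : ℝ) + 1) ^ (-m) ≤ ((k : ℝ) + 1) ^ |m| :=
      Real.rpow_le_rpow_of_exponent_le hb1 (neg_le_abs m)
    have h1 : ((k : ℝ) + 1) ^ |m| ≤ (Real.exp k) ^ |m| :=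
      Real.rpow_le_rpow (by positivity) (by linarith [Real.add_one_le_exp (k : ℝ)])
        (abs_nonneg m)
    have h2 : (Real.exp k) ^ |m| = (Real.exp |m|) ^ k := by
      rw [← Real.exp_mul, Real.exp_nat_mul]
    calc ‖f k‖ ≤ Cc * R ^ k * (Nat.factorial k) / ((k : ℝ) + 1) ^ m := hf k
      _ = Cc * R ^ k * (Nat.factorial k) * ((k : ℝ) + 1) ^ (-m) := by
          rw [Real.rpow_neg (by positivity)]; ring
      _ ≤ Cc * R ^ k * (Nat.factorial k) * (Real.exp |m|) ^ k := by
          have hle := h0.trans (h1.trans_eq h2)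
          exact mul_le_mul_of_nonneg_left hle (by positivity)
      _ = Cc * R' ^ k * (Nat.factorial k) := by rw [hR'def, mul_pow]; ring
  have ha' := key Ca a hCa ha
  have hb' := key Cb b hCb hb
  -- the constants
  set c : ℝ := (8 * R' * Real.exp 1)⁻¹ with hcdef
  have hc : 0 < c := by positivity
  set q : ℝ := 2 * c * R' with hqdef
  have hq : q = (4 * Real.exp 1)⁻¹ := by
    rw [hqdef, hcdef]
    field_simp
    ring
  have hq0 : 0 < q := by positivity
  have hq1 : q ≤ 1 := by
    rw [hq]
    exact inv_le_one_of_one_le₀ (by nlinarith [Real.exp_one_gt_d9])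
  have h4q : 4 * q = (Real.exp 1)⁻¹ := by
    rw [hq]; field_simp
  refine ⟨c, hc, c, hc, Ca * Cb, by positivity, fun N hN => ?_⟩
  set M := ⌊c * N⌋₊ with hMdef
  have hNpos : (0 : ℝ) < N := by exact_mod_cast hN
  set x : ℂ := ((N : ℂ))⁻¹ with hxdef
  -- the algebraic identity
  set U := ((range (M + 1)) ×ˢ (range (M + 1))).filter (fun p => ¬ p.1 + p.2 ≤ M) with hUdef
  have hA : (∑ k ∈ range (M + 1), x ^ k * (∑ i ∈ range (k + 1), a i * b (k - i)))
      - (∑ k ∈ range (M + 1), x ^ k * a k) * (∑ k ∈ range (M + 1), x ^ k * b k)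
      = - ∑ p ∈ U, x ^ (p.1 + p.2) * (a p.1 * b p.2) := by
    have hbu : ((range (M + 1)) ×ˢ (range (M + 1))).filter (fun p => p.1 + p.2 ≤ M)
        = (range (M + 1)).biUnion (fun k => Finset.HasAntidiagonal.antidiagonal k) := by
      ext p
      simp only [mem_filter, mem_product, mem_range, mem_biUnion, Finset.HasAntidiagonal.mem_antidiagonal,
        Nat.lt_succ_iff]
      constructor
      · rintro ⟨⟨h1, h2⟩, h3⟩; exact ⟨p.1 + p.2, h3, rfl⟩
      · rintro ⟨k, hk, rfl⟩; omega
    have hdisj : (↑(range (M + 1)) : Set ℕ).PairwiseDisjoint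
        (fun k => (Finset.HasAntidiagonal.antidiagonal k : Finset (ℕ × ℕ))) := by
      intro i _ j _ hij
      simp only [Function.onFun, Finset.disjoint_left, Finset.HasAntidiagonal.mem_antidiagonal]
      rintro p h1 h2
      exact hij (by omega)
    have h1 : ∑ k ∈ range (M + 1), x ^ k * (∑ i ∈ range (k + 1), a i * b (k - i))
        = ∑ p ∈ ((range (M + 1)) ×ˢ (range (M + 1))).filter (fun p => p.1 + p.2 ≤ M),
            x ^ (p.1 + p.2) * (a p.1 * b p.2) := by
      rw [hbu, Finset.sum_biUnion hdisj]
      refine Finset.sum_congr rfl fun k _ => ?_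
      rw [Finset.Nat.sum_antidiagonal_eq_sum_range_succ_mk, Finset.mul_sum]
      refine Finset.sum_congr rfl fun i hi => ?_
      simp only [mem_range, Nat.lt_succ_iff] at hi
      rw [Nat.add_sub_cancel' hi]
    have h2 : (∑ k ∈ range (M + 1), x ^ k * a k) * (∑ k ∈ range (M + 1), x ^ k * b k)
        = ∑ p ∈ (range (M + 1)) ×ˢ (range (M + 1)), x ^ (p.1 + p.2) * (a p.1 * b p.2) := by
      rw [Finset.sum_mul_sum]
      rw [← Finset.sum_product']
      refine Finset.sum_congr rfl fun p _ => ?_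
      rw [pow_add]; ring
    have h3 := Finset.sum_filter_add_sum_filter_not ((range (M + 1)) ×ˢ (range (M + 1)))
      (fun p => p.1 + p.2 ≤ M) (fun p => x ^ (p.1 + p.2) * (a p.1 * b p.2))
    rw [h1, h2, ← h3, hUdef]
    ring
  rw [hA, norm_neg]
  -- bound each term
  have hMle : (M : ℝ) ≤ c * N := Nat.floor_le (by positivity)
  have habsx : ‖x‖ = (N : ℝ)⁻¹ := by
    rw [hxdef, norm_inv, Complex.norm_natCast]
  have hterm : ∀ p ∈ U, ‖x ^ (p.1 + p.2) * (a p.1 * b p.2)‖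
      ≤ Ca * Cb * q ^ (M + 1) := by
    rintro ⟨i, j⟩ hp
    simp only [hUdef, mem_filter, mem_product, mem_range, Nat.lt_succ_iff, not_le] at hp
    obtain ⟨⟨hi, hj⟩, hk⟩ := hp
    have hkN : ((i + j : ℕ) : ℝ) ≤ 2 * c * N := by
      have h2M : ((i + j : ℕ) : ℝ) ≤ 2 * (M : ℝ) := by
        exact_mod_cast (show i + j ≤ 2 * M by omega)
      linarith
    have hfac : ((Nat.factorial i : ℝ)) * (Nat.factorial j) ≤ (Nat.factorial (i + j)) := by
      have := Nat.le_of_dvd (Nat.factorial_pos (i + j))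
        (Nat.factorial_mul_factorial_dvd_factorial_add i j)
      exact_mod_cast this
    have hfk : ((Nat.factorial (i + j) : ℝ)) ≤ ((i + j : ℕ) : ℝ) ^ (i + j) := by
      exact_mod_cast Nat.factorial_le_pow (i + j)
    have hai := ha' i
    have hbj := hb' j
    calc ‖x ^ (i + j) * (a i * b j)‖
        = (N : ℝ)⁻¹ ^ (i + j) * (‖a i‖ * ‖b j‖) := by
          rw [norm_mul, norm_mul, norm_pow, habsx]
      _ ≤ (N : ℝ)⁻¹ ^ (i + j)
            * ((Ca * R' ^ i * (Nat.factorial i)) * (Cb * R' ^ j * (Nat.factorial j))) := by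
          gcongr
      _ = Ca * Cb * (R' ^ (i + j) * (((Nat.factorial i : ℝ)) * (Nat.factorial j))
            * ((N : ℝ)⁻¹) ^ (i + j)) := by
          rw [pow_add]; ring
      _ ≤ Ca * Cb * (R' ^ (i + j) * (((i + j : ℕ) : ℝ) ^ (i + j)) * ((N : ℝ)⁻¹) ^ (i + j)) := by
          gcongr
          exact hfac.trans hfk
      _ = Ca * Cb * (R' * ((i + j : ℕ) : ℝ) * (N : ℝ)⁻¹) ^ (i + j) := by
          ring
      _ ≤ Ca * Cb * q ^ (i + j) := by
          have hbase : R' * ((i + j : ℕ) : ℝ) * (N : ℝ)⁻¹ ≤ q := by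
            rw [hqdef, mul_inv_le_iff₀ hNpos]
            calc R' * ((i + j : ℕ) : ℝ) ≤ R' * (2 * c * N) := by gcongr
              _ = 2 * c * R' * N := by ring
          have hbase0 : (0 : ℝ) ≤ R' * ((i + j : ℕ) : ℝ) * (N : ℝ)⁻¹ := by positivity
          exact mul_le_mul_of_nonneg_left (pow_le_pow_left₀ hbase0 hbase _) (by positivity)
      _ ≤ Ca * Cb * q ^ (M + 1) := by
          exact mul_le_mul_of_nonneg_left
            (pow_le_pow_of_le_one hq0.le hq1 (by omega)) (by positivity)
  calc ‖∑ p ∈ U, x ^ (p.1 + p.2) * (a p.1 * b p.2)‖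
      ≤ ∑ p ∈ U, ‖x ^ (p.1 + p.2) * (a p.1 * b p.2)‖ :=
        norm_sum_le _ _
    _ ≤ ∑ _p ∈ U, Ca * Cb * q ^ (M + 1) := Finset.sum_le_sum hterm
    _ = U.card * (Ca * Cb * q ^ (M + 1)) := by rw [Finset.sum_const, nsmul_eq_mul]
    _ ≤ ((M + 1 : ℕ) ^ 2 : ℝ) * (Ca * Cb * q ^ (M + 1)) := by
        have h1 : U.card ≤ ((range (M + 1)) ×ˢ (range (M + 1))).card :=
          Finset.card_filter_le _ _
        have h2 : ((range (M + 1)) ×ˢ (range (M + 1))).card = (M + 1) ^ 2 := by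
          rw [Finset.card_product, Finset.card_range]; ring
        have h3 : (U.card : ℝ) ≤ ((M + 1 : ℕ) ^ 2 : ℝ) := by exact_mod_cast h1.trans_eq h2
        exact mul_le_mul_of_nonneg_right h3 (by positivity)
    _ ≤ Ca * Cb * Real.exp (-c * N) := by
        have hM1 : ((M + 1 : ℕ) : ℝ) ≤ 2 ^ (M + 1) := by
          exact_mod_cast (Nat.lt_two_pow_self (n := M + 1)).le
        have step1 : ((M + 1 : ℕ) ^ 2 : ℝ) * q ^ (M + 1) ≤ (4 * q) ^ (M + 1) := by
          have : ((M + 1 : ℕ) ^ 2 : ℝ) ≤ 4 ^ (M + 1) := by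
            push_cast
            calc ((M : ℝ) + 1) ^ 2 ≤ ((2 : ℝ) ^ (M + 1)) ^ 2 := by
                  apply pow_le_pow_left₀ (by positivity)
                  exact_mod_cast hM1
              _ = 4 ^ (M + 1) := by
                  rw [← pow_mul, mul_comm (M + 1) 2, pow_mul]; norm_num
          calc ((M + 1 : ℕ) ^ 2 : ℝ) * q ^ (M + 1) ≤ 4 ^ (M + 1) * q ^ (M + 1) := by gcongr
            _ = (4 * q) ^ (M + 1) := (mul_pow 4 q (M + 1)).symm
        have step2 : (4 * q) ^ (M + 1) ≤ Real.exp (-c * N) := by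
          rw [h4q, ← Real.exp_neg, ← Real.exp_nat_mul]
          rw [Real.exp_le_exp]
          have hfl := (Nat.lt_floor_add_one (c * (N : ℝ))).le
          push_cast
          push_cast at hfl
          nlinarith [hfl]
        calc ((M + 1 : ℕ) ^ 2 : ℝ) * (Ca * Cb * q ^ (M + 1))
            = Ca * Cb * (((M + 1 : ℕ) ^ 2 : ℝ) * q ^ (M + 1)) := by ring
          _ ≤ Ca * Cb * (4 * q) ^ (M + 1) := by gcongr
          _ ≤ Ca * Cb * Real.exp (-c * N) := by gcongr
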